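/- Let γ > 1, ξ < 0, a₀ > 0, a₁ < √(−2ξ/(γ−1)) · a₀^{(1−γ)/2}, and 0 < T < ∞. Suppose a : [0,T) → ℝ is twice continuously differentiable with a(t) > 0 and a''(t) = ξ / a(t)^γ for all t ∈ [0,T), a(0) = a₀, a'(0) = a₁, and a(t) → 0 as t → T⁻. Then a'(t)/a(t) → −∞ as t → T⁻. Consequently, for the constructed solution with velocity u(x,t) = (a'(t)/a(t)) x + b(t), the velocity gradient ∂u/∂x(x,t) = a'(t)/a(t) blows up (tends to −∞) as t → T⁻ at every spatial point x. -/

import Mathlib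

open Real Set Filter Topology

/-- In the blowup case of the Emden equation, if the positive solution `a`
on `[0,T)` tends to `0` as `t → T⁻`, then `a'(t)/a(t) → −∞` as `t → T⁻`;
consequently the velocity gradient `∂u/∂x(x,t) = a'(t)/a(t)` of the
constructed solution `u(x,t) = (a'(t)/a(t))x + b(t)` blows up (tends to `−∞`)
at every spatial point `x` as `t → T⁻`. -/
theorem velocity_gradient_blowup
    (γ ξ a₀ a₁ T : ℝ) (hγ : 1 < γ) (hξ : ξ < 0) (ha₀ : 0 < a₀)
    (ha₁ : a₁ < Real.sqrt (-2 * ξ / (γ - 1)) * a₀ ^ ((1 - γ) / 2))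
    (hT : 0 < T)
    (a a' a'' b : ℝ → ℝ)
    (ha : ∀ t ∈ Set.Ico 0 T, HasDerivAt a (a' t) t)
    (ha' : ∀ t ∈ Set.Ico 0 T, HasDerivAt a' (a'' t) t)
    (ha''c : ContinuousOn a'' (Set.Ico 0 T))
    (hpos : ∀ t ∈ Set.Ico 0 T, 0 < a t)
    (hODE : ∀ t ∈ Set.Ico 0 T, a'' t = ξ / a t ^ γ)
    (h0 : a 0 = a₀) (h1 : a' 0 = a₁)
    (hlim : Filter.Tendsto a (nhdsWithin T (Set.Iio T)) (nhds 0))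
    (u : ℝ → ℝ → ℝ)
    (hu : u = fun x t => (a' t / a t) * x + b t) :
    Filter.Tendsto (fun t => a' t / a t) (nhdsWithin T (Set.Iio T)) Filter.atBot ∧
    ∀ x : ℝ, Filter.Tendsto (fun t => deriv (fun y => u y t) x)
      (nhdsWithin T (Set.Iio T)) Filter.atBot := by
  have hIco : Convex ℝ (Set.Ico (0:ℝ) T) := convex_Ico 0 T
  have hint : interior (Set.Ico (0:ℝ) T) = Set.Ioo 0 T := interior_Ico
  -- eventually t ∈ Ico 0 T along the filter
  have hmem : ∀ᶠ t in nhdsWithin T (Set.Iio T), t ∈ Set.Ico 0 T := by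
    filter_upwards [Ioo_mem_nhdsLT hT]
      with t ht using ⟨le_of_lt ht.1, ht.2⟩
  -- Step 1: there exists t₀ with a' t₀ < 0
  have hstep1 : ∃ t₀ ∈ Set.Ico 0 T, a' t₀ < 0 := by
    by_contra h
    push_neg at h
    have hmono : MonotoneOn a (Set.Ico 0 T) := by
      apply monotoneOn_of_deriv_nonneg hIco
      · exact fun t ht => (ha t ht).continuousAt.continuousWithinAt
      · intro t ht
        rw [hint] at ht
        exact (ha t ⟨le_of_lt ht.1, ht.2⟩).differentiableAt.differentiableWithinAt
      · intro t ht
        rw [hint] at ht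
        rw [(ha t ⟨le_of_lt ht.1, ht.2⟩).deriv]
        exact h t ⟨le_of_lt ht.1, ht.2⟩
    have hge : ∀ᶠ t in nhdsWithin T (Set.Iio T), a₀ ≤ a t := by
      filter_upwards [hmem] with t ht
      have := hmono ⟨le_refl 0, hT⟩ ht ht.1
      rwa [h0] at this
    have : a₀ ≤ 0 := ge_of_tendsto hlim hge
    linarith
  obtain ⟨t₀, ht₀, ht₀neg⟩ := hstep1
  -- Step 2: a' is antitone on Ico 0 T
  have hanti : AntitoneOn a' (Set.Ico 0 T) := by
    apply antitoneOn_of_deriv_nonpos hIco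
    · exact fun t ht => (ha' t ht).continuousAt.continuousWithinAt
    · intro t ht
      rw [hint] at ht
      exact (ha' t ⟨le_of_lt ht.1, ht.2⟩).differentiableAt.differentiableWithinAt
    · intro t ht
      rw [hint] at ht
      have ht' : t ∈ Set.Ico 0 T := ⟨le_of_lt ht.1, ht.2⟩
      rw [(ha' t ht').deriv, hODE t ht']
      have hpow : 0 < a t ^ γ := Real.rpow_pos_of_pos (hpos t ht') γ
      exact le_of_lt (div_neg_of_neg_of_pos hξ hpow)
  -- Step 3: a tends to 0 from the right
  have hpos' : ∀ᶠ t in nhdsWithin T (Set.Iio T), 0 < a t := by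
    filter_upwards [hmem] with t ht using hpos t ht
  have hlim' : Filter.Tendsto a (nhdsWithin T (Set.Iio T)) (nhdsWithin 0 (Set.Ioi 0)) := by
    apply tendsto_nhdsWithin_of_tendsto_nhds_of_eventually_within _ hlim
    filter_upwards [hpos'] with t ht using ht
  have hinv : Filter.Tendsto (fun t => (a t)⁻¹) (nhdsWithin T (Set.Iio T)) Filter.atTop :=
    hlim'.inv_tendsto_nhdsGT_zero
  have hc : Filter.Tendsto (fun t => a' t₀ * (a t)⁻¹) (nhdsWithin T (Set.Iio T)) Filter.atBot :=
    hinv.const_mul_atTop_of_neg ht₀neg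
  have hmain : Filter.Tendsto (fun t => a' t / a t) (nhdsWithin T (Set.Iio T)) Filter.atBot := by
    apply tendsto_atBot_mono' _ _ hc
    have hmem' : ∀ᶠ t in nhdsWithin T (Set.Iio T), t ∈ Set.Ico t₀ T := by
      filter_upwards [Ioo_mem_nhdsLT ht₀.2]
        with t ht using ⟨le_of_lt ht.1, ht.2⟩
    filter_upwards [hmem, hmem'] with t ht ht'
    have hle : a' t ≤ a' t₀ := hanti ht₀ ht ht'.1
    rw [div_eq_mul_inv]
    exact mul_le_mul_of_nonneg_right hle (inv_nonneg.mpr (le_of_lt (hpos t ht)))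
  refine ⟨hmain, fun x => ?_⟩
  have hderiv : ∀ t, deriv (fun y => u y t) x = a' t / a t := by
    intro t
    have h : HasDerivAt (fun y => (a' t / a t) * y + b t) (a' t / a t) x := by
      simpa using (((hasDerivAt_id x).const_mul (a' t / a t)).add_const (b t))
    rw [hu]
    exact h.deriv
  simpa only [hderiv] using hmain
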